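/- Let A(y,z) = (y/(1-4y)) * exp((z/2) * ((1-4y)^(-1/2) - 1)) as a formal power series in y and z over ℚ. Then A satisfies the partial differential equation (1-4y) * ∂²A/∂y² = z(1 + 2 ∂/∂z)(A/y) + (z+8) * ∂A/∂y + 2z * ∂²A/(∂y∂z), with A(0,z) = 0, (∂A/∂y)(0,z) = 1, and A(y,0) = y/(1-4y). -/

import Mathlib

open PowerSeries

/-- Partial derivative with respect to the inner variable `y` of an element of
`ℚ[[y]][[z]]` (derivative applied to each coefficient). -/
noncomputable def Dy (A : PowerSeries (PowerSeries ℚ)) : PowerSeries (PowerSeries ℚ) :=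
  PowerSeries.mk fun n => derivativeFun (coeff (R := PowerSeries ℚ) n A)

/-- Partial derivative with respect to the outer variable `z`. -/
noncomputable def Dz (A : PowerSeries (PowerSeries ℚ)) : PowerSeries (PowerSeries ℚ) :=
  derivativeFun A

theorem dF_eq (f : ℚ⟦X⟧) : derivativeFun f = d⁄dX ℚ f := rfl

theorem dF_C {R : Type*} [CommSemiring R] (r : R) : derivativeFun (C r : R⟦X⟧) = 0 :=
  derivative_C

theorem coeff_dF {R : Type*} [CommSemiring R] (f : R⟦X⟧) (n : ℕ) :
    coeff n (derivativeFun f) = coeff (n + 1) f * (n + 1) :=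
  coeff_derivative f n

theorem dF_zero : derivativeFun (0 : ℚ⟦X⟧) = 0 := by
  rw [dF_eq, map_zero]

theorem dF_X : derivativeFun (X : ℚ⟦X⟧) = 1 := by
  rw [dF_eq, derivative_X]

theorem dF_sum {ι : Type*} (s : Finset ι) (f : ι → ℚ⟦X⟧) :
    derivativeFun (∑ i ∈ s, f i) = ∑ i ∈ s, derivativeFun (f i) := by
  simp only [dF_eq, map_sum]

theorem dF_mul (f h : ℚ⟦X⟧) :
    derivativeFun (f * h) = f * derivativeFun h + h * derivativeFun f := by
  rw [derivativeFun_mul]; simp [smul_eq_mul]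

theorem Dy_add (A B : PowerSeries (PowerSeries ℚ)) : Dy (A + B) = Dy A + Dy B := by
  ext n
  simp [Dy, dF_eq, map_add]

theorem Dy_mul (A B : PowerSeries (PowerSeries ℚ)) :
    Dy (A * B) = Dy A * B + A * Dy B := by
  ext n : 1
  simp only [Dy, coeff_mk, map_add, coeff_mul, dF_sum, dF_mul, Finset.sum_add_distrib]
  rw [add_comm]
  congr 1
  exact Finset.sum_congr rfl fun p _ => by ring

theorem Dy_C (r : ℚ⟦X⟧) : Dy ((C (R := PowerSeries ℚ)) r) = C (derivativeFun r) := by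
  ext n
  simp only [Dy, coeff_mk, coeff_C]
  split_ifs <;> simp [dF_zero]

theorem Dy_X : Dy (X : PowerSeries (PowerSeries ℚ)) = 0 := by
  ext n
  simp only [Dy, coeff_mk, coeff_X, map_zero]
  split_ifs <;> simp [dF_zero, dF_eq, Derivation.map_one_eq_zero]

theorem Dz_C_mul (r : ℚ⟦X⟧) (B : PowerSeries (PowerSeries ℚ)) :
    Dz (C (R := PowerSeries ℚ) r * B) = C r * Dz B := by
  unfold Dz
  rw [derivativeFun_mul, dF_C]
  simp [smul_eq_mul]

theorem dF_add (f h : ℚ⟦X⟧) :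
    derivativeFun (f + h) = derivativeFun f + derivativeFun h := derivativeFun_add f h

theorem dF_two : derivativeFun (2 : ℚ⟦X⟧) = 0 := by
  rw [show (2:ℚ⟦X⟧) = C (R := ℚ) 2 by norm_cast, dF_C]

theorem dF_four : derivativeFun (4 : ℚ⟦X⟧) = 0 := by
  rw [show (4:ℚ⟦X⟧) = C (R := ℚ) 4 by norm_cast, dF_C]

theorem dF_sq (f : ℚ⟦X⟧) : derivativeFun (f^2) = 2 * f * derivativeFun f := by
  rw [pow_two, dF_mul]; ring

theorem dF_pow (w : ℚ⟦X⟧) (n : ℕ) :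
    derivativeFun (w ^ (n+1)) = (n+1) * w ^ n * derivativeFun w := by
  induction n with
  | zero => simp [pow_one]
  | succ n ih =>
    rw [pow_succ, dF_mul, ih]
    push_cast
    ring

theorem hfacC (n : ℕ) :
    C (R := ℚ) (((n+1).factorial : ℚ)⁻¹) * C (R := ℚ) (((n+1:ℕ)):ℚ) = C (R := ℚ) ((n.factorial : ℚ)⁻¹) := by
  rw [← map_mul]
  congr 1
  rw [Nat.factorial_succ]
  have h1 : ((n.factorial : ℚ)) ≠ 0 := by exact_mod_cast n.factorial_ne_zero
  have h2 : (((n+1) : ℕ) : ℚ) ≠ 0 := by positivity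
  push_cast
  field_simp

theorem A_satisfies_PDE
    (s g w : PowerSeries ℚ)
    (hs : s = PowerSeries.mk fun n => ((2 * n).choose n : ℚ))
    (hg : (1 - 4 * X) * g = 1)
    (hw : w = C (R := ℚ) (1 / 2) * (s - 1))
    (A A' : PowerSeries (PowerSeries ℚ))
    (hA : A = C (R := PowerSeries ℚ) (X * g) *
      PowerSeries.mk (fun n => C (R := ℚ) ((n.factorial : ℚ)⁻¹) * w ^ n))
    (hA' : C (R := PowerSeries ℚ) (X : PowerSeries ℚ) * A' = A) :
    (C (R := PowerSeries ℚ) (1 - 4 * X)) * Dy (Dy A) =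
        X * (A' + 2 * Dz A') + (X + 8) * Dy A + 2 * X * Dy (Dz A)
      ∧ (∀ n : ℕ, constantCoeff (R := ℚ) (coeff (R := PowerSeries ℚ) n A) = 0)
      ∧ (∀ n : ℕ, constantCoeff (R := ℚ) (coeff (R := PowerSeries ℚ) n (Dy A)) =
          if n = 0 then 1 else 0)
      ∧ coeff (R := PowerSeries ℚ) 0 A = X * g := by
  set E : PowerSeries (PowerSeries ℚ) :=
    PowerSeries.mk (fun n => C (R := ℚ) ((n.factorial : ℚ)⁻¹) * w ^ n) with hE
  -- basic inner facts
  have hcg : constantCoeff (R := ℚ) g = 1 := by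
    have := congrArg (constantCoeff (R := ℚ)) hg
    simpa using this
  have hcs : ∀ n, coeff (R := ℚ) n s = ((2*n).choose n : ℚ) := by
    intro n; rw [hs, coeff_mk]
  have hcs0 : constantCoeff (R := ℚ) s = 1 := by
    have := hcs 0
    simpa using this
  have hcw : constantCoeff (R := ℚ) w = 0 := by
    rw [hw]
    simp [hcs0]
  have hD14 : derivativeFun (1 - 4*X : ℚ⟦X⟧) = -4 := by
    rw [dF_eq, map_sub, Derivation.map_one_eq_zero,
      show (4:ℚ⟦X⟧) = C (R := ℚ) 4 from by norm_cast, Derivation.leibniz, derivative_C, derivative_X]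
    simp
  have hDg : derivativeFun g = 4 * g^2 := by
    have h := congrArg derivativeFun hg
    rw [dF_mul, hD14, derivativeFun_one] at h
    calc derivativeFun g = (1-4*X)*g * derivativeFun g := by rw [hg, one_mul]
      _ = 4*g^2 := by linear_combination g * h
  have hDs1 : (1 - 4*(X:ℚ⟦X⟧)) * derivativeFun s = 2 * s := by
    have hkey : ∀ f : ℚ⟦X⟧, (1 - 4*(X:ℚ⟦X⟧)) * f = f - X * (4 * f) := by intro f; ring
    rw [hkey]
    ext n
    rw [map_sub, coeff_dF]
    have h2 : ∀ (f : ℚ⟦X⟧) (k : ℕ), coeff (R := ℚ) k (2 * f) = 2 * coeff (R := ℚ) k f := by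
      intro f k
      rw [show (2:ℚ⟦X⟧) = C (R := ℚ) 2 by norm_cast, coeff_C_mul]
    have h4 : ∀ (f : ℚ⟦X⟧) (k : ℕ), coeff (R := ℚ) k (4 * f) = 4 * coeff (R := ℚ) k f := by
      intro f k
      rw [show (4:ℚ⟦X⟧) = C (R := ℚ) 4 by norm_cast, coeff_C_mul]
    rw [h2]
    cases n with
    | zero =>
      rw [coeff_zero_X_mul, hcs, hcs]
      norm_num
    | succ n =>
      rw [coeff_succ_X_mul, h4, coeff_dF, hcs, hcs]
      have key := Nat.succ_mul_centralBinom_succ (n+1)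
      have key' : ((n+2 : ℕ) : ℚ) * ((2*(n+2)).choose (n+2) : ℚ)
          = 2 * (2*(n+1)+1 : ℕ) * ((2*(n+1)).choose (n+1) : ℚ) := by
        rw [Nat.centralBinom] at key
        exact_mod_cast congrArg (Nat.cast : ℕ → ℚ) key
      push_cast at key' ⊢
      ring_nf at key' ⊢
      linarith [key']
  have hDs : derivativeFun s = 2 * (s * g) := by
    calc derivativeFun s = (1-4*X)*g * derivativeFun s := by rw [hg, one_mul]
      _ = 2 * (s * g) := by linear_combination g * hDs1
  have h2w : 2 * w = s - 1 := by
    rw [hw, show (2:ℚ⟦X⟧) = C (R := ℚ) 2 by norm_cast, ← mul_assoc, ← map_mul]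
    norm_num
  have hDw : derivativeFun w = s * g := by
    rw [hw, dF_mul, dF_C, dF_eq, map_sub, Derivation.map_one_eq_zero, ← dF_eq, hDs]
    have h12 : (C (R := ℚ)) (1/2) * (2:ℚ⟦X⟧) = 1 := by
      rw [show (2:ℚ⟦X⟧) = C (R := ℚ) 2 by norm_cast, ← map_mul]; norm_num
    linear_combination (s*g) * h12
  -- E facts
  have hDzE : Dz E = C (R := PowerSeries ℚ) w * E := by
    ext n : 1
    rw [hE, Dz, coeff_dF, coeff_C_mul, coeff_mk, coeff_mk,
      show ((n:ℚ⟦X⟧)+1) = C (R := ℚ) (((n+1:ℕ)):ℚ) by rw [map_natCast]; push_cast; ring]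
    linear_combination (w^(n+1)) * hfacC n
  have hDyE : Dy E = X * (C (R := PowerSeries ℚ) (s*g) * E) := by
    ext n : 1
    rw [hE, Dy, coeff_mk, coeff_mk, dF_mul, dF_C, mul_zero, add_zero]
    cases n with
    | zero => simp [pow_zero, derivativeFun_one]
    | succ n =>
      rw [coeff_succ_X_mul, coeff_C_mul, coeff_mk, dF_pow, hDw,
        show ((n:ℚ⟦X⟧)+1) = C (R := ℚ) (((n+1:ℕ)):ℚ) by rw [map_natCast]; push_cast; ring]
      linear_combination (w^n * (s*g)) * hfacC n
  -- A' in closed form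
  have hXne : (C (R := PowerSeries ℚ) (X : ℚ⟦X⟧)) ≠ 0 := by
    intro h
    have h0 := congrArg (coeff (R := PowerSeries ℚ) 0) h
    simp at h0
  have hA'E : A' = C (R := PowerSeries ℚ) g * E := by
    apply mul_left_cancel₀ hXne
    rw [hA', hA, ← mul_assoc, ← map_mul]
  have hcoeffA : ∀ n, coeff (R := PowerSeries ℚ) n A
      = X * g * (C (R := ℚ) ((n.factorial:ℚ)⁻¹) * w^n) := by
    intro n
    rw [hA, coeff_C_mul, coeff_mk]
  refine ⟨?_, ?_, ?_, ?_⟩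
  · -- the PDE
    have hr1 : (1 - 4 * C (R := PowerSeries ℚ) (X:ℚ⟦X⟧)) * C (R := PowerSeries ℚ) g = 1 := by
      have := congrArg (C (R := PowerSeries ℚ)) hg
      simpa only [map_mul, map_sub, map_one, map_ofNat] using this
    have hr5 : 2 * C (R := PowerSeries ℚ) w = C (R := PowerSeries ℚ) s - 1 := by
      have := congrArg (C (R := PowerSeries ℚ)) h2w
      simpa only [map_mul, map_sub, map_one, map_ofNat] using this
    rw [hA, hA'E]
    simp only [Dy_mul, Dy_C, Dy_add, Dy_X, Dz_C_mul, hDzE, hDyE, dF_mul, dF_add, dF_sq, dF_two,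
      dF_four, dF_X, hDg, hDs, hDw, dF_C, derivativeFun_one]
    simp only [map_mul, map_add, map_sub, map_one, map_zero, map_ofNat, map_pow]
    set Y := C (R := PowerSeries ℚ) (X : ℚ⟦X⟧)
    set G := C (R := PowerSeries ℚ) g
    set S := C (R := PowerSeries ℚ) s
    set W := C (R := PowerSeries ℚ) w
    linear_combination
      (E * (8*G + 32*Y*G^2 + X*(2*S*G + 14*Y*S*G^2) + X^2*(Y*S^2*G^2))) * hr1 +
      (E * (X^2*(Y*S*G^2) - X*(G + 4*Y*G^2)) - (2*Y*G^2*X^2*S + G*X)*E) * hr5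
  · -- A(0,z) = 0
    intro n
    rw [hcoeffA]
    simp
  · -- (∂A/∂y)(0,z) = 1
    intro n
    have h1 : coeff (R := PowerSeries ℚ) n (Dy A) = derivativeFun (coeff (R := PowerSeries ℚ) n A) := by
      rw [Dy, coeff_mk]
    rw [h1, hcoeffA]
    have h2 : ∀ f : ℚ⟦X⟧, constantCoeff (R := ℚ) (derivativeFun f) = coeff (R := ℚ) 1 f := by
      intro f
      rw [← coeff_zero_eq_constantCoeff, coeff_dF]
      simp
    rw [h2, mul_assoc, coeff_succ_X_mul, coeff_zero_eq_constantCoeff]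
    cases n with
    | zero => simp [hcg]
    | succ n => simp [hcg, hcw, Nat.succ_ne_zero]
  · -- A(y,0) = y/(1-4y)
    rw [hcoeffA 0]
    simp
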